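/- Let R be a unital ring, n ≥ 2, M a 2-torsion free unital Mₙ(R)-bimodule, and Δ : Mₙ(R) → M an additive map satisfying: AB = BA = 0 implies Δ(A)B + AΔ(B) + Δ(B)A + BΔ(A) = 0, with EΔ(E)F = FΔ(E)E = 0 where E = E₁₁ and F = 1 - E₁₁. Then for every A ∈ Mₙ(R), Δ(EAF) = EΔ(EAF)F. -/

import Mathlib

/-- A (not necessarily unital) bimodule structure of a ring `A` on an
additive group `M`, given by a left action `l` and a right action `r`. -/
structure RingBimod (A M : Type*) [Ring A] [AddCommGroup M] where
  l : A → M → M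
  r : M → A → M
  l_add : ∀ a m₁ m₂, l a (m₁ + m₂) = l a m₁ + l a m₂
  add_l : ∀ a₁ a₂ m, l (a₁ + a₂) m = l a₁ m + l a₂ m
  r_add : ∀ m₁ m₂ a, r (m₁ + m₂) a = r m₁ a + r m₂ a
  add_r : ∀ m a₁ a₂, r m (a₁ + a₂) = r m a₁ + r m a₂
  mul_l : ∀ a₁ a₂ m, l (a₁ * a₂) m = l a₁ (l a₂ m)
  r_mul : ∀ m a₁ a₂, r m (a₁ * a₂) = r (r m a₁) a₂
  l_r : ∀ a₁ m a₂, l a₁ (r m a₂) = r (l a₁ m) a₂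

namespace ZPD

variable {A M : Type*} [Ring A] [AddCommGroup M]

theorem l_zero (bm : RingBimod A M) (a : A) : bm.l a 0 = 0 := by
  have h := bm.l_add a 0 0
  rw [add_zero] at h
  exact left_eq_add.mp h

theorem zero_l (bm : RingBimod A M) (m : M) : bm.l 0 m = 0 := by
  have h := bm.add_l 0 0 m
  rw [add_zero] at h
  exact left_eq_add.mp h

theorem r_zero (bm : RingBimod A M) (m : M) : bm.r m 0 = 0 := by
  have h := bm.add_r m 0 0
  rw [add_zero] at h
  exact left_eq_add.mp h

theorem zero_r (bm : RingBimod A M) (a : A) : bm.r 0 a = 0 := by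
  have h := bm.r_add 0 0 a
  rw [add_zero] at h
  exact left_eq_add.mp h

/-- The "corner" operator `m ↦ a m b` as an additive hom. -/
def sand (bm : RingBimod A M) (a b : A) : M →+ M :=
  AddMonoidHom.mk' (fun m => bm.r (bm.l a m) b)
    (by
      intro m₁ m₂
      show bm.r (bm.l a (m₁ + m₂)) b = bm.r (bm.l a m₁) b + bm.r (bm.l a m₂) b
      rw [bm.l_add, bm.r_add])

theorem sand_apply (bm : RingBimod A M) (a b : A) (m : M) :
    sand bm a b m = bm.r (bm.l a m) b := rfl

theorem sand_l (bm : RingBimod A M) (a b c : A) (m : M) :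
    sand bm a b (bm.l c m) = sand bm (a * c) b m := by
  simp only [sand_apply]
  rw [bm.mul_l]

theorem sand_r (bm : RingBimod A M) (a b c : A) (m : M) :
    sand bm a b (bm.r m c) = sand bm a (c * b) m := by
  simp only [sand_apply]
  rw [bm.l_r, bm.r_mul]

theorem sand_add_left (bm : RingBimod A M) (a a' b : A) (m : M) :
    sand bm (a + a') b m = sand bm a b m + sand bm a' b m := by
  simp only [sand_apply]
  rw [bm.add_l, bm.r_add]

theorem sand_add_right (bm : RingBimod A M) (a b b' : A) (m : M) :
    sand bm a (b + b') m = sand bm a b m + sand bm a b' m := by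
  simp only [sand_apply]
  rw [bm.add_r]

theorem sand_neg_left (bm : RingBimod A M) (a b : A) (m : M) :
    sand bm (-a) b m = -(sand bm a b m) := by
  have h := sand_add_left bm a (-a) b m
  rw [add_neg_cancel] at h
  have h0 : sand bm 0 b m = 0 := by
    simp only [sand_apply]; rw [zero_l, zero_r]
  rw [h0] at h
  exact eq_neg_of_add_eq_zero_right h.symm

theorem sand_neg_right (bm : RingBimod A M) (a b : A) (m : M) :
    sand bm a (-b) m = -(sand bm a b m) := by
  have h := sand_add_right bm a b (-b) m
  rw [add_neg_cancel] at h
  have h0 : sand bm a 0 m = 0 := by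
    simp only [sand_apply]; rw [r_zero]
  rw [h0] at h
  exact eq_neg_of_add_eq_zero_right h.symm

theorem sand_sub_left (bm : RingBimod A M) (a a' b : A) (m : M) :
    sand bm (a - a') b m = sand bm a b m - sand bm a' b m := by
  rw [sub_eq_add_neg, sand_add_left, sand_neg_left, sub_eq_add_neg]

theorem sand_sub_right (bm : RingBimod A M) (a b b' : A) (m : M) :
    sand bm a (b - b') m = sand bm a b m - sand bm a b' m := by
  rw [sub_eq_add_neg, sand_add_right, sand_neg_right, sub_eq_add_neg]

theorem sand_zero_left (bm : RingBimod A M) (b : A) (m : M) :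
    sand bm 0 b m = 0 := by
  simp only [sand_apply]; rw [zero_l, zero_r]

theorem sand_zero_right (bm : RingBimod A M) (a : A) (m : M) :
    sand bm a 0 m = 0 := by
  simp only [sand_apply]; rw [r_zero]

theorem sand_mul_left (bm : RingBimod A M) (c d b : A) (m : M) :
    sand bm (c * d) b m = bm.l c (sand bm d b m) := by
  simp only [sand_apply]
  rw [bm.mul_l, bm.l_r]

theorem sand_mul_right (bm : RingBimod A M) (a d e : A) (m : M) :
    sand bm a (d * e) m = bm.r (sand bm a d m) e := by
  simp only [sand_apply]
  rw [bm.r_mul]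

end ZPD

open ZPD in
theorem stmt5 (R : Type*) [Ring R] (n : ℕ) (hn : 2 ≤ n)
    (M : Type*) [AddCommGroup M] (bm : RingBimod (Matrix (Fin n) (Fin n) R) M)
    (hunit : ∀ m : M, bm.l 1 m = m ∧ bm.r m 1 = m)
    (htf : ∀ m : M, m + m = 0 → m = 0)
    (Δ : Matrix (Fin n) (Fin n) R → M)
    (hadd : ∀ A B, Δ (A + B) = Δ A + Δ B)
    (hΔ : ∀ A B, A * B = 0 → B * A = 0 →
      bm.r (Δ A) B + bm.l A (Δ B) + bm.r (Δ B) A + bm.l B (Δ A) = 0)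
    (E F : Matrix (Fin n) (Fin n) R)
    (hE : E = Matrix.single ⟨0, by omega⟩ ⟨0, by omega⟩ (1 : R))
    (hF : F = 1 - E)
    (hEF1 : bm.l E (bm.r (Δ E) F) = 0) (hEF2 : bm.l F (bm.r (Δ E) E) = 0) :
    ∀ A : Matrix (Fin n) (Fin n) R,
      Δ (E * A * F) = bm.l E (bm.r (Δ (E * A * F)) F) := by
  classical
  -- basic additive facts about Δ
  have hΔ0 : Δ 0 = 0 := by
    have h := hadd 0 0
    rw [add_zero] at h
    exact left_eq_add.mp h
  have hneg : ∀ B, Δ (-B) = -(Δ B) := by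
    intro B
    have h := hadd B (-B)
    rw [add_neg_cancel, hΔ0] at h
    exact eq_neg_of_add_eq_zero_right h.symm
  have hsub : ∀ B C, Δ (B - C) = Δ B - Δ C := by
    intro B C
    rw [sub_eq_add_neg, hadd, hneg, sub_eq_add_neg]
  set i0 : Fin n := ⟨0, by omega⟩ with hi0
  have hE' : E = Matrix.single i0 i0 (1 : R) := hE
  -- matrix facts
  have hE2 : E * E = E := by
    rw [hE', Matrix.single_mul_single_same, one_mul]
  have hEF : E * F = 0 := by rw [hF, mul_sub, mul_one, hE2, sub_self]
  have hFE : F * E = 0 := by rw [hF, sub_mul, one_mul, hE2, sub_self]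
  have hFF : F * F = F := by
    rw [hF, sub_mul, one_mul, mul_sub, mul_one, hE2, sub_self, sub_zero]
  -- sandwich version of the corner hypotheses
  have sFEE : sand bm F E (Δ E) = 0 := by
    rw [sand_apply, ← bm.l_r]; exact hEF2
  -- relation from the pair (E, F)
  have relEF := hΔ E F hEF hFE
  -- F Δ(F) E = 0
  have sFFE : sand bm F E (Δ F) = 0 := by
    have h := congrArg (fun m => sand bm F E m) relEF
    simp only [map_add, map_zero, sand_r, sand_l, hFE, hE2, hFF,
      sand_zero_left, sand_zero_right, sFEE, zero_add, add_zero] at h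
    exact h
  -- E Δ(F) E = 0
  have sEEF : sand bm E E (Δ F) = 0 := by
    have h := congrArg (fun m => sand bm E E m) relEF
    simp only [map_add, map_zero, sand_r, sand_l, hFE, hE2, hEF,
      sand_zero_left, sand_zero_right, zero_add, add_zero] at h
    exact htf _ h
  -- F Δ(E) F = 0
  have sFFdE : sand bm F F (Δ E) = 0 := by
    have h := congrArg (fun m => sand bm F F m) relEF
    simp only [map_add, map_zero, sand_r, sand_l, hFE, hEF, hFF,
      sand_zero_left, sand_zero_right, zero_add, add_zero] at h
    exact htf _ h
  -- F Δ(U) E = 0 for all U with E U = U and U E = U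
  have hU : ∀ U, E * U = U → U * E = U → sand bm F E (Δ U) = 0 := by
    intro U hEU hUE
    have hUF : U * F = 0 := by rw [hF, mul_sub, mul_one, hUE, sub_self]
    have hFU : F * U = 0 := by rw [← hEU, ← mul_assoc, hFE, zero_mul]
    have rel := hΔ U F hUF hFU
    have t3 : sand bm F U (Δ F) = 0 := by
      rw [← hEU, sand_mul_right, sFFE, zero_r]
    have h := congrArg (fun m => sand bm F E m) rel
    simp only [map_add, map_zero, sand_r, sand_l, hFE, hFU, hUE, hFF,
      sand_zero_left, sand_zero_right, t3, zero_add, add_zero] at h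
    exact h
  -- Jordan relation at square-zero elements
  have hJord : ∀ Z : Matrix (Fin n) (Fin n) R, Z * Z = 0 →
      bm.r (Δ Z) Z + bm.l Z (Δ Z) = 0 := by
    intro Z hZZ
    have rel := hΔ Z Z hZZ hZZ
    apply htf
    rw [show bm.r (Δ Z) Z + bm.l Z (Δ Z) + (bm.r (Δ Z) Z + bm.l Z (Δ Z))
        = bm.r (Δ Z) Z + bm.l Z (Δ Z) + bm.r (Δ Z) Z + bm.l Z (Δ Z) from by abel]
    exact rel
  -- F Δ(E₁ⱼ) E = 0 for j ≠ 0
  have hmP : ∀ j : Fin n, j ≠ i0 →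
      sand bm F E (Δ (Matrix.single i0 j (1 : R))) = 0 := by
    intro j hj
    have hPP : Matrix.single i0 j (1 : R) * Matrix.single i0 j (1 : R) = 0 :=
      Matrix.single_mul_single_of_ne (c := (1 : R)) (i := i0) (j := j) (k := i0) (h := hj) (d := 1)
    have hEPj : E * Matrix.single i0 j (1 : R) = Matrix.single i0 j (1 : R) := by
      rw [hE', Matrix.single_mul_single_same, one_mul]
    have hPjE : Matrix.single i0 j (1 : R) * E = 0 := by
      rw [hE']; exact Matrix.single_mul_single_of_ne (c := (1 : R)) (i := i0) (j := j) (k := i0) (h := hj) (d := 1)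
    have hPjF : Matrix.single i0 j (1 : R) * F = Matrix.single i0 j (1 : R) := by
      rw [hF, mul_sub, mul_one, hPjE, sub_zero]
    have hFPj : F * Matrix.single i0 j (1 : R) = 0 := by
      rw [hF, sub_mul, one_mul, hEPj, sub_self]
    have hJ := hJord _ hPP
    have h := congrArg (fun m => sand bm F F m) hJ
    simp only [map_add, map_zero, sand_r, sand_l, hPjF, hFPj,
      sand_zero_left, sand_zero_right, zero_add, add_zero] at h
    -- h : sand bm F (stdBasisMatrix i0 j 1) (Δ (stdBasisMatrix i0 j 1)) = 0
    have hPQ : Matrix.single i0 j (1 : R) * Matrix.single j i0 (1 : R) = E := by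
      rw [Matrix.single_mul_single_same, one_mul, hE']
    rw [← hPQ, sand_mul_right, h, zero_r]
  -- the key multiplication rule
  have hstar : ∀ U Z : Matrix (Fin n) (Fin n) R, E * U = U → U * E = U →
      E * Z = Z → Z * F = Z → Z * E = 0 → Z * Z = 0 →
      sand bm F E (Δ Z) = 0 → sand bm F E (Δ (U * Z)) = 0 := by
    intro U Z hEU hUE hEZ hZF hZE hZZ hmZ
    have hFU : F * U = 0 := by rw [← hEU, ← mul_assoc, hFE, zero_mul]
    have hUF : U * F = 0 := by rw [hF, mul_sub, mul_one, hUE, sub_self]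
    have hFZ : F * Z = 0 := by rw [← hEZ, ← mul_assoc, hFE, zero_mul]
    have hZU : Z * U = 0 := by rw [← hEU, ← mul_assoc, hZE, zero_mul]
    have hUZE : U * Z * E = 0 := by rw [mul_assoc, hZE, mul_zero]
    have hAB : (U + U * Z) * (F - Z) = 0 := by
      rw [add_mul, mul_sub, mul_sub, hUF, mul_assoc, hZF, mul_assoc, hZZ, mul_zero]
      abel
    have hBA : (F - Z) * (U + U * Z) = 0 := by
      rw [sub_mul, mul_add, mul_add, ← mul_assoc, ← mul_assoc, hFU, hZU, zero_mul]
      abel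
    have rel := hΔ (U + U * Z) (F - Z) hAB hBA
    rw [hadd U (U * Z), hsub F Z] at rel
    have hBE : (F - Z) * E = 0 := by rw [sub_mul, hFE, hZE, sub_self]
    have hFA : F * (U + U * Z) = 0 := by
      rw [mul_add, ← mul_assoc, hFU, zero_mul, add_zero]
    have hAE : (U + U * Z) * E = U := by rw [add_mul, hUE, hUZE, add_zero]
    have hFB : F * (F - Z) = F := by rw [mul_sub, hFF, hFZ, sub_zero]
    have e1 : sand bm F U (Δ F) = 0 := by
      rw [← hEU, sand_mul_right, sFFE, zero_r]
    have e2 : sand bm F U (Δ Z) = 0 := by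
      rw [← hEU, sand_mul_right, hmZ, zero_r]
    have e3 : sand bm F E (Δ U) = 0 := hU U hEU hUE
    have h := congrArg (fun m => sand bm F E m) rel
    simp only [map_add, map_sub, map_zero, sand_r, sand_l, hBE, hFA, hAE, hFB,
      sand_zero_left, sand_zero_right, e1, e2, e3, zero_add, add_zero, sub_zero,
      sub_self] at h
    exact h
  -- the identity as a sum of diagonal matrix units
  have honesum : (∑ j : Fin n, Matrix.single j j (1 : R)) = 1 := by
    ext i k
    rw [Matrix.sum_apply]
    by_cases h : i = k
    · subst h
      rw [Matrix.one_apply_eq]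
      rw [Finset.sum_eq_single i]
      · simp [Matrix.single]
      · intro b _ hb
        simp only [Matrix.single, Matrix.of_apply, ite_eq_right_iff]
        exact fun hc => absurd hc.1 hb
      · intro hi; exact absurd (Finset.mem_univ i) hi
    · rw [Matrix.one_apply_ne h]
      apply Finset.sum_eq_zero
      intro b _
      simp only [Matrix.single, Matrix.of_apply, ite_eq_right_iff]
      exact fun hc => absurd (hc.1.symm.trans hc.2) h
  intro A
  obtain ⟨X, hXdef⟩ : ∃ X', X' = E * A * F := ⟨_, rfl⟩
  rw [← hXdef]
  have hXE : X * E = 0 := by rw [hXdef, mul_assoc, hFE, mul_zero]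
  have hFX : F * X = 0 := by rw [hXdef, ← mul_assoc, ← mul_assoc, hFE, zero_mul, zero_mul]
  have hEX : E * X = X := by rw [hXdef, ← mul_assoc, ← mul_assoc, hE2]
  have hXF : X * F = X := by rw [hXdef, mul_assoc, hFF]
  have hXX : X * X = 0 := by
    nth_rewrite 2 [hXdef]
    rw [← mul_assoc, ← mul_assoc, hXE, zero_mul, zero_mul]
  -- decomposition of X along columns
  have hFsum : (∑ j ∈ Finset.univ.erase i0, Matrix.single j j (1 : R)) = F := by
    have h := Finset.sum_erase_add Finset.univ
      (fun j => Matrix.single j j (1 : R)) (Finset.mem_univ i0)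
    rw [honesum] at h
    rw [hF, hE']
    exact eq_sub_of_add_eq h
  have hXsum : X = ∑ j ∈ Finset.univ.erase i0, X * Matrix.single j j (1 : R) := by
    rw [← Finset.mul_sum, hFsum, hXF]
  -- the key corner: F Δ(X) E = 0
  have hmX : sand bm F E (Δ X) = 0 := by
    have e1 : Δ X = ∑ j ∈ Finset.univ.erase i0,
        Δ (X * Matrix.single j j (1 : R)) := by
      conv_lhs => rw [hXsum]
      exact map_sum (AddMonoidHom.mk' Δ hadd) _ _
    rw [e1, map_sum]
    apply Finset.sum_eq_zero
    intro j hj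
    have hj0 : j ≠ i0 := Finset.ne_of_mem_erase hj
    have hQP : Matrix.single j i0 (1 : R) * Matrix.single i0 j (1 : R)
        = Matrix.single j j (1 : R) := by
      rw [Matrix.single_mul_single_same, one_mul]
    have hEjj : X * Matrix.single j j (1 : R)
        = (X * Matrix.single j i0 (1 : R)) * Matrix.single i0 j (1 : R) := by
      conv_rhs => rw [mul_assoc, hQP]
    rw [hEjj]
    have hQE : Matrix.single j i0 (1 : R) * E = Matrix.single j i0 (1 : R) := by
      rw [hE', Matrix.single_mul_single_same, one_mul]
    have hEPj : E * Matrix.single i0 j (1 : R) = Matrix.single i0 j (1 : R) := by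
      rw [hE', Matrix.single_mul_single_same, one_mul]
    have hPjE : Matrix.single i0 j (1 : R) * E = 0 := by
      rw [hE']; exact Matrix.single_mul_single_of_ne (c := (1 : R)) (i := i0) (j := j) (k := i0) (h := hj0) (d := 1)
    have hPjF : Matrix.single i0 j (1 : R) * F = Matrix.single i0 j (1 : R) := by
      rw [hF, mul_sub, mul_one, hPjE, sub_zero]
    have hPjPj : Matrix.single i0 j (1 : R) * Matrix.single i0 j (1 : R) = 0 :=
      Matrix.single_mul_single_of_ne (c := (1 : R)) (i := i0) (j := j) (k := i0) (h := hj0) (d := 1)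
    exact hstar (X * Matrix.single j i0 (1 : R)) (Matrix.single i0 j (1 : R))
      (by rw [← mul_assoc, hEX]) (by rw [mul_assoc, hQE])
      hEPj hPjF hPjE hPjPj (hmP j hj0)
  -- auxiliary corner computations for X
  have eXE : sand bm X E (Δ E) = 0 := by
    rw [← hXF, sand_mul_left, sFEE, l_zero]
  have eXF : sand bm X E (Δ F) = 0 := by
    rw [← hXF, sand_mul_left, sFFE, l_zero]
  have eXX : sand bm X E (Δ X) = 0 := by
    rw [← hXF, sand_mul_left, hXF, hmX, l_zero]
  have eFXE : sand bm F X (Δ E) = 0 := by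
    rw [← hEX, sand_mul_right, sFEE, zero_r]
  have eFXF : sand bm F X (Δ F) = 0 := by
    rw [← hEX, sand_mul_right, sFFE, zero_r]
  have eFXX : sand bm F X (Δ X) = 0 := by
    rw [← hEX, sand_mul_right, hEX, hmX, zero_r]
  -- E Δ(X) E = 0, via the pair (E - X, F + X)
  have hprod1 : (E - X) * (F + X) = 0 := by
    rw [sub_mul, mul_add, mul_add, hEF, hEX, hXF, hXX]
    abel
  have hprod2 : (F + X) * (E - X) = 0 := by
    rw [add_mul, mul_sub, mul_sub, hFE, hFX, hXE, hXX]
    abel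
  have rel3 := hΔ (E - X) (F + X) hprod1 hprod2
  rw [hsub E X, hadd F X] at rel3
  have sEEX : sand bm E E (Δ X) = 0 := by
    have hQE3 : (F + X) * E = 0 := by rw [add_mul, hFE, hXE, add_zero]
    have hEP3 : E * (E - X) = E - X := by rw [mul_sub, hE2, hEX]
    have hPE3 : (E - X) * E = E := by rw [sub_mul, hE2, hXE, sub_zero]
    have hEQ3 : E * (F + X) = X := by rw [mul_add, hEF, hEX, zero_add]
    have h := congrArg (fun m => sand bm E E m) rel3
    simp only [map_add, map_sub, map_zero, sand_r, sand_l, hQE3, hEP3, hPE3, hEQ3,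
      sand_sub_left, sand_add_left, sand_zero_left, sand_zero_right,
      sEEF, eXE, eXF, eXX, zero_add, add_zero, sub_zero, zero_sub, sub_self] at h
    exact htf _ h
  -- F Δ(X) F = 0, via the pair (E + X, F - X)
  have hprod4 : (E + X) * (F - X) = 0 := by
    rw [add_mul, mul_sub, mul_sub, hEF, hEX, hXF, hXX]
    abel
  have hprod5 : (F - X) * (E + X) = 0 := by
    rw [sub_mul, mul_add, mul_add, hFE, hFX, hXE, hXX]
    abel
  have rel2 := hΔ (E + X) (F - X) hprod4 hprod5
  rw [hadd E X, hsub F X] at rel2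
  have sFFX : sand bm F F (Δ X) = 0 := by
    have hQF : (F - X) * F = F - X := by rw [sub_mul, hFF, hXF]
    have hFP : F * (E + X) = 0 := by rw [mul_add, hFE, hFX, add_zero]
    have hPF : (E + X) * F = X := by rw [add_mul, hEF, hXF, zero_add]
    have hFQ : F * (F - X) = F := by rw [mul_sub, hFF, hFX, sub_zero]
    have h := congrArg (fun m => sand bm F F m) rel2
    simp only [map_add, map_sub, map_zero, sand_r, sand_l, hQF, hFP, hPF, hFQ,
      sand_sub_right, sand_add_right, sand_zero_left, sand_zero_right,
      sFFdE, eFXE, eFXF, eFXX, zero_add, add_zero, sub_zero, zero_sub, sub_self] at h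
    exact htf _ h
  -- assemble
  have hone : (1 : Matrix (Fin n) (Fin n) R) = E + F := by
    rw [hF]; abel
  have hfinal : Δ X = sand bm E F (Δ X) := by
    have h11 : Δ X = sand bm 1 1 (Δ X) := by
      rw [sand_apply, (hunit (bm.l 1 (Δ X))).2, (hunit (Δ X)).1]
    conv_lhs => rw [h11]
    rw [hone, sand_add_left, sand_add_right, sand_add_right,
      sEEX, hmX, sFFX, zero_add, add_zero, add_zero]
  rw [sand_apply, ← bm.l_r] at hfinal
  exact hfinal
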